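/- For a qubit with Hamiltonian H_0 = (ω_0/2)(σ_z + I), the ergotropy of any qubit state ρ satisfies E(ρ) = Tr[H_0 ρ] − (ω_0/2)(1 − √(2μ(ρ) − 1)), where μ(ρ) = Tr[ρ²] is the purity; equivalently E(ρ) = E(ρ) − ω_0/2 + (ω_0/2)√(2μ(ρ)−1) with E(ρ) the energy. -/

import Mathlib

open Matrix
open scoped ComplexOrder

/-- Energy of a state `ρ` with respect to Hamiltonian `H`: `Tr[Hρ]` (real part). -/
noncomputable def energy {d : ℕ} (H ρ : Matrix (Fin d) (Fin d) ℂ) : ℝ :=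
  (Matrix.trace (H * ρ)).re

/-- Minimal energy achievable from `ρ` by unitaries (passive-state energy). -/
noncomputable def passiveEnergy {d : ℕ} (H ρ : Matrix (Fin d) (Fin d) ℂ) : ℝ :=
  sInf {x : ℝ | ∃ U ∈ Matrix.unitaryGroup (Fin d) ℂ, x = energy H (U * ρ * Uᴴ)}

/-- Ergotropy: maximal work extractable by unitaries. -/
noncomputable def ergotropy {d : ℕ} (H ρ : Matrix (Fin d) (Fin d) ℂ) : ℝ :=
  energy H ρ - passiveEnergy H ρ

/-- Pauli matrices. -/
noncomputable def sigmaX : Matrix (Fin 2) (Fin 2) ℂ := !![0, 1; 1, 0]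
noncomputable def sigmaY : Matrix (Fin 2) (Fin 2) ℂ := !![0, -Complex.I; Complex.I, 0]
noncomputable def sigmaZ : Matrix (Fin 2) (Fin 2) ℂ := !![1, 0; 0, -1]

/-- Lowering operator `σ₋ = |g⟩⟨e|`. -/
noncomputable def sigmaMinus : Matrix (Fin 2) (Fin 2) ℂ := !![0, 0; 1, 0]

/-- Qubit Hamiltonian `H₀ = (ω₀/2)(σ_z + 1)`. -/
noncomputable def qubitH (ω₀ : ℝ) : Matrix (Fin 2) (Fin 2) ℂ :=
  (ω₀ / 2) • (sigmaZ + 1)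

/-- Purity `μ(ρ) = Tr[ρ²]`. -/
noncomputable def purity (ρ : Matrix (Fin 2) (Fin 2) ℂ) : ℝ :=
  (Matrix.trace (ρ * ρ)).re

/-- closed-form qubit ergotropy in terms of energy and purity. -/
private lemma energy_qubitH (ω₀ : ℝ) (A : Matrix (Fin 2) (Fin 2) ℂ) :
    energy (qubitH ω₀) A = ω₀ * (A 0 0).re := by
  simp [energy, qubitH, sigmaZ, Matrix.trace, Matrix.mul_apply, Fin.sum_univ_two,
    Matrix.one_apply, Matrix.smul_apply, Matrix.add_apply]

theorem qubit_ergotropy_formula (ω₀ : ℝ) (hω : 0 < ω₀)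
    (ρ : Matrix (Fin 2) (Fin 2) ℂ) (hρ : ρ.PosSemidef) (htr : ρ.trace = 1) :
    ergotropy (qubitH ω₀) ρ =
      energy (qubitH ω₀) ρ - (ω₀ / 2) * (1 - Real.sqrt (2 * purity ρ - 1)) := by
  classical
  have hH : ρ.IsHermitian := hρ.1
  set V : Matrix (Fin 2) (Fin 2) ℂ := (hH.eigenvectorUnitary : Matrix (Fin 2) (Fin 2) ℂ) with hV
  set l : Fin 2 → ℝ := hH.eigenvalues with hl
  have hVmem : V ∈ Matrix.unitaryGroup (Fin 2) ℂ := (hH.eigenvectorUnitary).2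
  have hVV : V * star V = 1 := (Matrix.mem_unitaryGroup_iff).mp hVmem
  have hVV' : star V * V = 1 := (Matrix.mem_unitaryGroup_iff').mp hVmem
  have hdiag : star V * ρ * V = diagonal (RCLike.ofReal ∘ l) :=
    by rw [← hH.conjStarAlgAut_star_eigenvectorUnitary, Unitary.conjStarAlgAut_apply]; simp [hV]
  have hspec : ρ = V * diagonal (RCLike.ofReal ∘ l) * star V := hH.spectral_theorem
  -- eigenvalues nonneg
  have hl0 : 0 ≤ l 0 := hρ.eigenvalues_nonneg 0
  have hl1 : 0 ≤ l 1 := hρ.eigenvalues_nonneg 1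
  -- sum of eigenvalues = 1
  have hsum : l 0 + l 1 = 1 := by
    have h1 : Matrix.trace (star V * ρ * V) = Matrix.trace ρ := by
      rw [Matrix.trace_mul_cycle, hVV, one_mul]
    rw [hdiag, htr] at h1
    have := congrArg Complex.re h1
    simpa [Matrix.trace, Fin.sum_univ_two] using this
  -- purity = sum of squares of eigenvalues
  have hpur : purity ρ = l 0 ^ 2 + l 1 ^ 2 := by
    have h2 : ρ * ρ = V * diagonal (RCLike.ofReal ∘ l) * diagonal (RCLike.ofReal ∘ l) * star V := by
      conv_lhs => rw [hspec]
      rw [show V * diagonal (RCLike.ofReal ∘ l) * star V * (V * diagonal (RCLike.ofReal ∘ l) * star V)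
          = V * diagonal (RCLike.ofReal ∘ l) * (star V * V) * diagonal (RCLike.ofReal ∘ l) * star V by
        noncomm_ring]
      rw [hVV']
      noncomm_ring
    have h3 : Matrix.trace (ρ * ρ)
        = Matrix.trace (diagonal (RCLike.ofReal ∘ l) * diagonal (RCLike.ofReal ∘ l)) := by
      rw [h2, Matrix.trace_mul_cycle, ← mul_assoc, hVV', one_mul]
    have := congrArg Complex.re h3
    simpa [purity, Matrix.trace, Matrix.diagonal_mul_diagonal, Fin.sum_univ_two, pow_two]
      using this
  set m : ℝ := min (l 0) (l 1) with hm
  set S : Set ℝ :=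
    {x : ℝ | ∃ U ∈ Matrix.unitaryGroup (Fin 2) ℂ, x = energy (qubitH ω₀) (U * ρ * Uᴴ)} with hS
  -- lower bound
  have hlb : ∀ x ∈ S, ω₀ * m ≤ x := by
    rintro x ⟨U, hU, rfl⟩
    have hWmem : U * V ∈ Matrix.unitaryGroup (Fin 2) ℂ := mul_mem hU hVmem
    set W := U * V with hW
    have hUrho : U * ρ * Uᴴ = W * diagonal (RCLike.ofReal ∘ l) * star W := by
      rw [hspec, hW]
      simp only [Matrix.star_mul]
      noncomm_ring
    have hWW : W * star W = 1 := (Matrix.mem_unitaryGroup_iff).mp hWmem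
    have hnorm : Complex.normSq (W 0 0) + Complex.normSq (W 0 1) = 1 := by
      have := congrArg (fun M => (M 0 0).re) hWW
      simpa [Matrix.mul_apply, Fin.sum_univ_two, Matrix.one_apply, Matrix.conjTranspose_apply,
        Complex.normSq_apply, Complex.mul_re] using this
    have hentry : ((U * ρ * Uᴴ) 0 0).re
        = l 0 * Complex.normSq (W 0 0) + l 1 * Complex.normSq (W 0 1) := by
      rw [hUrho]
      simp [Matrix.mul_apply, Fin.sum_univ_two, Matrix.diagonal_apply, Matrix.conjTranspose_apply,
        Complex.normSq_apply, Complex.mul_re, Complex.mul_im]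
      ring
    rw [energy_qubitH, hentry]
    have h0 : 0 ≤ Complex.normSq (W 0 0) := Complex.normSq_nonneg _
    have h1 : 0 ≤ Complex.normSq (W 0 1) := Complex.normSq_nonneg _
    have hm0 : m ≤ l 0 := min_le_left _ _
    have hm1 : m ≤ l 1 := min_le_right _ _
    have hA1 : (0:ℝ) ≤ 1 - Complex.normSq (W 0 0) := by linarith
    have key : m ≤ l 0 * Complex.normSq (W 0 0) + l 1 * Complex.normSq (W 0 1) := by
      have hB : Complex.normSq (W 0 1) = 1 - Complex.normSq (W 0 0) := by linarith
      rw [hB]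
      nlinarith [mul_nonneg h0 (sub_nonneg.2 hm0), mul_nonneg hA1 (sub_nonneg.2 hm1)]
    exact mul_le_mul_of_nonneg_left key hω.le
  -- membership of ω₀ * l 0
  have hmem0 : ω₀ * l 0 ∈ S := by
    refine ⟨star V, ?_, ?_⟩
    · exact (Unitary.star_mem hVmem : _)
    · have : star V * ρ * (star V)ᴴ = diagonal (RCLike.ofReal ∘ l) := by
        have : (star V)ᴴ = V := by simp [Matrix.star_eq_conjTranspose]
        rw [this, hdiag]
      rw [this, energy_qubitH]
      simp [Matrix.diagonal_apply]
  -- membership of ω₀ * l 1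
  have hmem1 : ω₀ * l 1 ∈ S := by
    have hXmem : sigmaX ∈ Matrix.unitaryGroup (Fin 2) ℂ := by
      rw [Matrix.mem_unitaryGroup_iff]
      ext i j
      fin_cases i <;> fin_cases j <;>
        simp [sigmaX, Matrix.mul_apply, Fin.sum_univ_two, Matrix.one_apply,
          Matrix.conjTranspose_apply]
    refine ⟨sigmaX * star V, mul_mem hXmem (Unitary.star_mem hVmem), ?_⟩
    have hsV : (star V)ᴴ = V := by simp [Matrix.star_eq_conjTranspose]
    have hcalc : sigmaX * star V * ρ * (sigmaX * star V)ᴴ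
        = sigmaX * diagonal (RCLike.ofReal ∘ l) * sigmaXᴴ := by
      rw [Matrix.conjTranspose_mul, hsV, ← hdiag]
      noncomm_ring
    rw [hcalc, energy_qubitH]
    simp [sigmaX, Matrix.mul_apply, Matrix.vecMul, dotProduct, Fin.sum_univ_two,
      Matrix.diagonal_apply, Matrix.conjTranspose_apply]
  -- passiveEnergy = ω₀ * m
  have hpe : passiveEnergy (qubitH ω₀) ρ = ω₀ * m := by
    have hbdd : BddBelow S := ⟨ω₀ * m, fun x hx => hlb x hx⟩
    apply le_antisymm
    · rcases min_cases (l 0) (l 1) with ⟨h, _⟩ | ⟨h, _⟩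
      · exact csInf_le hbdd (by rw [hm, h]; exact hmem0)
      · exact csInf_le hbdd (by rw [hm, h]; exact hmem1)
    · exact le_csInf ⟨ω₀ * l 0, hmem0⟩ hlb
  -- final algebra
  have hsqrt : Real.sqrt (2 * purity ρ - 1) = |l 0 - l 1| := by
    have : 2 * purity ρ - 1 = (l 0 - l 1) ^ 2 := by
      rw [hpur]; nlinarith [hsum]
    rw [this, Real.sqrt_sq_eq_abs]
  have hmin : ω₀ * m = (ω₀ / 2) * (1 - |l 0 - l 1|) := by
    rcases le_total (l 0) (l 1) with h | h
    · rw [hm, min_eq_left h, abs_of_nonpos (by linarith)]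
      have h2 : l 1 = 1 - l 0 := by linarith
      rw [h2]; ring
    · rw [hm, min_eq_right h, abs_of_nonneg (by linarith)]
      have h2 : l 1 = 1 - l 0 := by linarith
      rw [h2]; ring
  rw [ergotropy, hpe, hsqrt, hmin]
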